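/- Let Ξ = Θ₁ Σ Θ₂ be a Smith factorization of Ξ ∈ ℤ^{s×s} with Σ = diag(σ₁,…,σ_s) and Θ₁, Θ₂ unimodular. Let h = h₁ ⊗ ⋯ ⊗ h_s be the tensor product of finitely supported univariate masks h_j each satisfying the univariate QMF equation ∑_{k∈ℤ} h_j(k) h_j(k − σ_j m) = |σ_j| δ(m) for all m ∈ ℤ. Then the mask a := h(Θ₁^{-1} ·) satisfies the multivariate QMF equation ∑_{α∈ℤ^s} a(α) a(α − Ξγ) = |det Ξ| δ(γ) for all γ ∈ ℤ^s. -/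

import Mathlib

/-- Let `Ξ = Θ₁ Σ Θ₂` be a Smith factorization with `Σ = diag(σ₁,…,σ_s)` and
`Θ₁, Θ₂` unimodular (with integer inverses), and let `h = h₁ ⊗ ⋯ ⊗ h_s` be a
tensor product of finitely supported univariate masks each satisfying the
univariate QMF equation with scaling factor `σ_j`. Then `a := h(Θ₁^{-1}·)`
satisfies the multivariate QMF equation with dilation `Ξ`. -/
theorem tensor_mask_satisfies_QMF
    {s : ℕ} (Ξ Θ₁ Θ₂ Θ₁inv : Matrix (Fin s) (Fin s) ℤ)
    (σ : Fin s → ℤ) (h : Fin s → ℤ → ℝ)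
    -- Smith factorization
    (hSmith : Ξ = Θ₁ * Matrix.diagonal σ * Θ₂)
    (hΘ₁ : |Θ₁.det| = 1) (hΘ₂ : |Θ₂.det| = 1)
    (hΘ₁inv : Θ₁ * Θ₁inv = 1 ∧ Θ₁inv * Θ₁ = 1)
    -- the univariate masks are finitely supported
    (hfin : ∀ j, (Function.support (h j)).Finite)
    -- univariate QMF equations
    (hQMF : ∀ j : Fin s, ∀ m : ℤ,
      ∑ᶠ k : ℤ, h j k * h j (k - σ j * m) =
        |(σ j : ℝ)| * (if m = 0 then (1 : ℝ) else 0))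
    -- a := h(Θ₁^{-1}·), with h the tensor product of the h_j
    (a : (Fin s → ℤ) → ℝ)
    (ha : ∀ α : Fin s → ℤ, a α = ∏ j : Fin s, h j (Θ₁inv.mulVec α j)) :
    ∀ γ : Fin s → ℤ,
      ∑ᶠ α : Fin s → ℤ, a α * a (α - Ξ.mulVec γ) =
        |(Ξ.det : ℝ)| * (if γ = 0 then (1 : ℝ) else 0) := by
  intro γ
  set m : Fin s → ℤ := Θ₂.mulVec γ with hm
  have hinvΞ : Θ₁inv * Ξ = Matrix.diagonal σ * Θ₂ := by
    rw [hSmith, mul_assoc Θ₁, ← mul_assoc Θ₁inv, hΘ₁inv.2, one_mul]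
  set F : Fin s → ℤ → ℝ := fun j k => h j k * h j (k - σ j * m j) with hF
  have key : ∀ β : Fin s → ℤ,
      a (Θ₁.mulVec β) * a (Θ₁.mulVec β - Ξ.mulVec γ) = ∏ j, F j (β j) := by
    intro β
    have h1 : Θ₁inv.mulVec (Θ₁.mulVec β) = β := by
      rw [Matrix.mulVec_mulVec, hΘ₁inv.2, Matrix.one_mulVec]
    have h2 : Θ₁inv.mulVec (Θ₁.mulVec β - Ξ.mulVec γ) = fun j => β j - σ j * m j := by
      rw [Matrix.mulVec_sub, h1, Matrix.mulVec_mulVec, hinvΞ]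
      funext j
      have : (Matrix.diagonal σ * Θ₂).mulVec γ j = σ j * m j := by
        rw [← Matrix.mulVec_mulVec]
        exact Matrix.mulVec_diagonal σ (Θ₂.mulVec γ) j
      simp [this]
    rw [ha, ha, h1, h2, ← Finset.prod_mul_distrib]
  calc ∑ᶠ α : Fin s → ℤ, a α * a (α - Ξ.mulVec γ)
      = ∑ᶠ β : Fin s → ℤ, a (Θ₁.mulVec β) * a (Θ₁.mulVec β - Ξ.mulVec γ) := by
        exact (finsum_comp_equiv
          (⟨Θ₁.mulVec, Θ₁inv.mulVec,
            fun x => by rw [Matrix.mulVec_mulVec, hΘ₁inv.2, Matrix.one_mulVec],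
            fun x => by rw [Matrix.mulVec_mulVec, hΘ₁inv.1, Matrix.one_mulVec]⟩ :
              (Fin s → ℤ) ≃ (Fin s → ℤ))
          (f := fun α => a α * a (α - Ξ.mulVec γ))).symm
    _ = ∑ᶠ β : Fin s → ℤ, ∏ j, F j (β j) := finsum_congr fun β => key β
    _ = ∑ β ∈ Fintype.piFinset (fun j => (hfin j).toFinset), ∏ j, F j (β j) := by
        apply finsum_eq_sum_of_support_subset
        intro β hβ
        simp only [Function.mem_support] at hβ
        simp only [Finset.coe_sort_coe, Finset.mem_coe, Fintype.mem_piFinset]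
        intro j
        rw [Set.Finite.mem_toFinset, Function.mem_support]
        intro hz
        exact hβ (Finset.prod_eq_zero (Finset.mem_univ j) (by simp [hF, hz]))
    _ = ∏ j, ∑ k ∈ (hfin j).toFinset, F j k := (Finset.prod_univ_sum _ _).symm
    _ = ∏ j, |(σ j : ℝ)| * (if m j = 0 then (1 : ℝ) else 0) := by
        refine Finset.prod_congr rfl fun j _ => ?_
        rw [← hQMF j (m j)]
        refine (finsum_eq_sum_of_support_subset _ ?_).symm
        intro k hk
        simp only [Function.mem_support] at hk
        rw [Finset.mem_coe, Set.Finite.mem_toFinset, Function.mem_support]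
        intro hz; exact hk (by simp [hF, hz])
    _ = (∏ j, |(σ j : ℝ)|) * ∏ j, (if m j = 0 then (1 : ℝ) else 0) :=
        Finset.prod_mul_distrib
    _ = |(Ξ.det : ℝ)| * (if γ = 0 then (1 : ℝ) else 0) := by
        congr 1
        · rw [hSmith]
          push_cast [Matrix.det_mul, Matrix.det_diagonal, abs_mul]
          rw [show |(Θ₁.map fun x => (x : ℝ)).det| = 1 by
              have h1 := congrArg (Int.cast : ℤ → ℝ) hΘ₁; push_cast at h1; exact h1,
            show |(Θ₂.map fun x => (x : ℝ)).det| = 1 by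
              have h2 := congrArg (Int.cast : ℤ → ℝ) hΘ₂; push_cast at h2; exact h2]
          rw [one_mul, mul_one, Finset.abs_prod]
        · have hγm : γ = 0 ↔ m = 0 := by
            constructor
            · intro hγ; simp [hm, hγ]
            · intro h0
              have hu : IsUnit Θ₂.det := by
                rcases (abs_eq (zero_le_one)).mp hΘ₂ with h' | h' <;>
                  simp [Int.isUnit_iff, h']
              have : Θ₂⁻¹.mulVec (Θ₂.mulVec γ) = γ := by
                rw [Matrix.mulVec_mulVec, Matrix.nonsing_inv_mul _ hu, Matrix.one_mulVec]
              rw [← this, ← hm, h0, Matrix.mulVec_zero]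
          by_cases hγ : γ = 0
          · rw [if_pos hγ]
            exact Finset.prod_eq_one fun j _ =>
              if_pos (by rw [hγm.mp hγ]; rfl)
          · rw [if_neg hγ]
            obtain ⟨j, hj⟩ : ∃ j, m j ≠ 0 := by
              by_contra hc; push_neg at hc
              exact hγ (hγm.mpr (funext hc))
            refine Finset.prod_eq_zero (Finset.mem_univ j) ?_
            exact if_neg hj
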